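/- arXiv:1012.1913 — 2 statements merged into one kernel-verified Lean document; each statement's English description precedes it below -/
import Mathlib

section
/- Let A⁰_j be defined recursively by A^i_{i-1} = 2TL_i² and A^i_j = 2TL_i²(Σ_{k=j+1}^{i-1} A^k_j + 1) for i ≥ j+2, where T > 0 and L_1, ..., L_m > 0. Suppose nonnegative reals e_0, ..., e_{m-1} and d_0, ..., d_{m-1} satisfy d_0 = 0 and d_{l+1} ≤ 2TL_{l+1}² Σ_{i=0}^{l} (d_i + e_i) for 0 ≤ l ≤ m−2. Then d_i ≤ Σ_{j=0}^{i-1} A^i_j e_j for all 1 ≤ i ≤ m−1. -/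
/-- The constants `A^i_j` from the proof of Lemma 4.2:
`A i j = 2T L_i² (∑_{k=j+1}^{i-1} A k j + 1)` (so `A (j+1) j = 2T L_{j+1}²`). -/
noncomputable def Aconst (T : ℝ) (L : ℕ → ℝ) : ℕ → ℕ → ℝ
  | i, j =>
    2 * T * (L i) ^ 2 * ((∑ k ∈ (Finset.Ioo j i).attach, Aconst T L k.1 j) + 1)
termination_by i j => i
decreasing_by exact (Finset.mem_Ioo.mp k.2).2

/-- Discrete Gronwall-type estimate from the proof of Lemma 4.2. -/
theorem discrete_gronwall_Aconst (T : ℝ) (hT : 0 < T) (m : ℕ) (hm : 1 ≤ m)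
    (L : ℕ → ℝ) (hL : ∀ i, 0 < L i)
    (e d : ℕ → ℝ) (he : ∀ i, 0 ≤ e i) (hd : ∀ i, 0 ≤ d i)
    (hd0 : d 0 = 0)
    (hrec : ∀ l : ℕ, l ≤ m - 2 →
      d (l + 1) ≤ 2 * T * (L (l + 1)) ^ 2 * ∑ i ∈ Finset.range (l + 1), (d i + e i)) :
    ∀ i : ℕ, 1 ≤ i → i ≤ m - 1 → d i ≤ ∑ j ∈ Finset.range i, Aconst T L i j * e j := by
  have hA : ∀ i j : ℕ, Aconst T L i j
      = 2 * T * (L i) ^ 2 * ((∑ k ∈ Finset.Ioo j i, Aconst T L k j) + 1) := by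
    intro i j
    rw [Aconst]; congr 2; exact Finset.sum_attach (Finset.Ioo j i) (fun k => Aconst T L k j)
  intro i
  induction i using Nat.strong_induction_on with
  | _ i IH =>
    intro h1 h2
    obtain ⟨l, rfl⟩ : ∃ l, i = l + 1 := ⟨i - 1, (Nat.succ_pred_eq_of_pos h1).symm⟩
    have hl : l ≤ m - 2 := by omega
    have key : ∀ i' ∈ Finset.range (l + 1),
        d i' ≤ ∑ j ∈ Finset.range i', Aconst T L i' j * e j := by
      intro i' hi'
      rcases Nat.eq_zero_or_pos i' with h0 | hpos
      · simp [h0, hd0]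
      · exact IH i' (Finset.mem_range.mp hi') hpos (by
          have := Finset.mem_range.mp hi'; omega)
    have hnn : (0:ℝ) ≤ 2 * T * (L (l + 1)) ^ 2 := by positivity
    calc d (l + 1) ≤ 2 * T * (L (l + 1)) ^ 2 * ∑ i ∈ Finset.range (l + 1), (d i + e i) :=
          hrec l hl
      _ ≤ 2 * T * (L (l + 1)) ^ 2 *
          ∑ i ∈ Finset.range (l + 1), ((∑ j ∈ Finset.range i, Aconst T L i j * e j) + e i) := by
          apply mul_le_mul_of_nonneg_left _ hnn
          exact Finset.sum_le_sum fun i' hi' => add_le_add_left (key i' hi') _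
      _ = ∑ j ∈ Finset.range (l + 1), Aconst T L (l + 1) j * e j := by
          have hswap : ∑ i ∈ Finset.range (l + 1), ∑ j ∈ Finset.range i, Aconst T L i j * e j
              = ∑ j ∈ Finset.range (l + 1), ∑ k ∈ Finset.Ioo j (l + 1), Aconst T L k j * e j :=
            Finset.sum_comm' (by
              intro x y
              simp only [Finset.mem_range, Finset.mem_Ioo]
              omega)
          simp only [Finset.sum_add_distrib, mul_add, hswap]
          rw [Finset.mul_sum, Finset.mul_sum, ← Finset.sum_add_distrib]
          apply Finset.sum_congr rfl
          intro j _
          rw [hA (l + 1) j, ← Finset.sum_mul]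
          ring
end

section
/- Let 0 ≤ σ̲² < σ̄², T > 0, and suppose K : [0,T] → ℝ is nondecreasing with σ̲²(t−s) ≤ K(t) − K(s) ≤ σ̄²(t−s) for all 0 ≤ s ≤ t ≤ T, and additionally K(t) − K(s) = σ̄²(t−s) whenever s, t lie in the same interval [2iT/(2n), (2i+1)T/(2n)] and K(t) − K(s) = σ̲²(t−s) whenever s, t lie in the same interval [(2i+1)T/(2n), (2i+2)T/(2n)]. Then ∫_0^T δ_{2n}(s) dK(s) = (σ̄² − σ̲²)T/2. -/
open MeasureTheory Filter Set

noncomputable def deltaFn (T : ℝ) (n : ℕ) (s : ℝ) : ℝ :=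
  ∑ i ∈ Finset.range n,
    (-1 : ℝ) ^ i * Set.indicator (Set.Ioc ((i : ℝ) * T / n) (((i : ℝ) + 1) * T / n)) (fun _ => 1) s

lemma pair_sum (a b : ℝ) (n : ℕ) :
    ∑ i ∈ Finset.range (2 * n), (if Even i then a else b) = n * (a + b) := by
  induction n with
  | zero => simp
  | succ m ih =>
    have : 2 * (m + 1) = (2 * m + 1) + 1 := by ring
    rw [this, Finset.sum_range_succ, Finset.sum_range_succ, ih]
    have h1 : Even (2 * m) := even_two_mul m
    have h2 : ¬ Even (2 * m + 1) := by simp [Nat.even_add_one, h1]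
    rw [if_pos h1, if_neg h2]
    push_cast; ring

theorem integral_deltaFn_stieltjes_eq_max (T : ℝ) (hT : 0 < T)
    (σl2 σb2 : ℝ) (hσl2 : 0 ≤ σl2) (hσ : σl2 < σb2)
    (n : ℕ) (hn : 1 ≤ n)
    (K : StieltjesFunction ℝ)
    (hbounds : ∀ s t : ℝ, 0 ≤ s → s ≤ t → t ≤ T →
      σl2 * (t - s) ≤ K t - K s ∧ K t - K s ≤ σb2 * (t - s))
    (hup : ∀ i : ℕ, i < n → ∀ s t : ℝ,
      s ∈ Set.Icc (2 * (i:ℝ) * T / (2 * n)) ((2 * (i:ℝ) + 1) * T / (2 * n)) →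
      t ∈ Set.Icc (2 * (i:ℝ) * T / (2 * n)) ((2 * (i:ℝ) + 1) * T / (2 * n)) →
      s ≤ t → K t - K s = σb2 * (t - s))
    (hlo : ∀ i : ℕ, i < n → ∀ s t : ℝ,
      s ∈ Set.Icc ((2 * (i:ℝ) + 1) * T / (2 * n)) ((2 * (i:ℝ) + 2) * T / (2 * n)) →
      t ∈ Set.Icc ((2 * (i:ℝ) + 1) * T / (2 * n)) ((2 * (i:ℝ) + 2) * T / (2 * n)) →
      s ≤ t → K t - K s = σl2 * (t - s)) :
    (∫ s in Set.Ioc (0:ℝ) T, deltaFn T (2 * n) s ∂K.measure) = (σb2 - σl2) * T / 2 := by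
  have hnR : (0:ℝ) < (n:ℝ) := by exact_mod_cast hn
  set N : ℕ := 2 * n with hNdef
  have hNR : (0:ℝ) < (N : ℝ) := by simp only [hNdef]; push_cast; linarith
  have hNcast : ((N : ℕ) : ℝ) = 2 * (n : ℝ) := by simp only [hNdef]; push_cast; ring
  set a : ℕ → ℝ := fun i => (i : ℝ) * T / (N : ℝ) with hadef
  set b : ℕ → ℝ := fun i => ((i : ℝ) + 1) * T / (N : ℝ) with hbdef
  have hab : ∀ i : ℕ, a i ≤ b i := by
    intro i
    simp only [hadef, hbdef]
    gcongr
    linarith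
  have hsub : ∀ i : ℕ, i < N → Set.Ioc (a i) (b i) ⊆ Set.Ioc (0:ℝ) T := by
    intro i hi
    apply Set.Ioc_subset_Ioc
    · simp only [hadef]; positivity
    · simp only [hbdef]
      rw [div_le_iff₀ hNR]
      have : ((i:ℝ) + 1) ≤ (N : ℝ) := by exact_mod_cast Nat.succ_le_of_lt hi
      nlinarith
  have hμ : ∀ i : ℕ, K.measure (Set.Ioc (a i) (b i)) = ENNReal.ofReal (K (b i) - K (a i)) :=
    fun i => K.measure_Ioc _ _
  have hterm : ∀ i : ℕ, i < N →
      K (b i) - K (a i) = (if Even i then σb2 else σl2) * (T / (N : ℝ)) := by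
    intro i hi
    rcases Nat.even_or_odd i with he | ho
    · obtain ⟨j, hj⟩ := id he
      have hjn : j < n := by omega
      have ha' : a i = 2 * (j:ℝ) * T / (2 * (n:ℝ)) := by
        simp only [hadef, hNcast, hj]; push_cast; ring_nf
      have hb' : b i = (2 * (j:ℝ) + 1) * T / (2 * (n:ℝ)) := by
        simp only [hbdef, hNcast, hj]; push_cast; ring_nf
      have hle : 2 * (j:ℝ) * T / (2 * (n:ℝ)) ≤ (2 * (j:ℝ) + 1) * T / (2 * (n:ℝ)) := by
        gcongr
        linarith
      have hKe := hup j hjn _ _ (Set.left_mem_Icc.2 hle) (Set.right_mem_Icc.2 hle) hle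
      rw [ha', hb', hKe, if_pos he, hNcast]
      ring
    · obtain ⟨j, hj⟩ := id ho
      have hjn : j < n := by omega
      have ha' : a i = (2 * (j:ℝ) + 1) * T / (2 * (n:ℝ)) := by
        simp only [hadef, hNcast, hj]; push_cast; ring_nf
      have hb' : b i = (2 * (j:ℝ) + 2) * T / (2 * (n:ℝ)) := by
        simp only [hbdef, hNcast, hj]; push_cast; ring_nf
      have hle : (2 * (j:ℝ) + 1) * T / (2 * (n:ℝ)) ≤ (2 * (j:ℝ) + 2) * T / (2 * (n:ℝ)) := by
        gcongr
        linarith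
      have hKe := hlo j hjn _ _ (Set.left_mem_Icc.2 hle) (Set.right_mem_Icc.2 hle) hle
      rw [ha', hb', hKe, if_neg (Nat.not_even_iff_odd.mpr ho), hNcast]
      ring
  have hint : ∀ i ∈ Finset.range N,
      Integrable (fun s => (-1:ℝ) ^ i *
        Set.indicator (Set.Ioc (a i) (b i)) (fun _ => (1:ℝ)) s)
        (K.measure.restrict (Set.Ioc (0:ℝ) T)) := by
    intro i _
    apply Integrable.const_mul
    rw [integrable_indicator_iff measurableSet_Ioc]
    apply (integrableOn_const_iff (C := (1:ℝ))).2 (Or.inr _)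
    calc (K.measure.restrict (Set.Ioc (0:ℝ) T)) (Set.Ioc (a i) (b i))
        ≤ K.measure (Set.Ioc (a i) (b i)) := Measure.restrict_le_self _
      _ < ⊤ := by rw [hμ i]; exact ENNReal.ofReal_lt_top
  have hform : (fun s => deltaFn T N s) = fun s => ∑ i ∈ Finset.range N,
      (-1:ℝ) ^ i * Set.indicator (Set.Ioc (a i) (b i)) (fun _ => (1:ℝ)) s := by
    funext s
    simp only [deltaFn, hadef, hbdef]
  simp only [hform]
  rw [integral_finset_sum _ hint]
  have hstep : ∀ i ∈ Finset.range N,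
      (∫ s in Set.Ioc (0:ℝ) T,
        (-1:ℝ) ^ i * Set.indicator (Set.Ioc (a i) (b i)) (fun _ => (1:ℝ)) s ∂K.measure)
      = (if Even i then σb2 else σl2) * (T / (N : ℝ)) * (-1:ℝ) ^ i := by
    intro i hi
    rw [integral_const_mul, MeasureTheory.setIntegral_indicator measurableSet_Ioc,
      setIntegral_const, smul_eq_mul, mul_one,
      Set.inter_eq_self_of_subset_right (hsub i (Finset.mem_range.mp hi)), measureReal_def, hμ i,
      ENNReal.toReal_ofReal (by linarith [K.mono (hab i)] : 0 ≤ K (b i) - K (a i)),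
      hterm i (Finset.mem_range.mp hi)]
    ring
  rw [Finset.sum_congr rfl hstep]
  have hsimp : ∀ i ∈ Finset.range N,
      (if Even i then σb2 else σl2) * (T / (N : ℝ)) * (-1:ℝ) ^ i
      = (if Even i then σb2 * (T / (N:ℝ)) else -(σl2 * (T / (N:ℝ)))) := by
    intro i _
    rcases Nat.even_or_odd i with he | ho
    · rw [if_pos he, if_pos he, he.neg_one_pow]; ring
    · rw [if_neg (Nat.not_even_iff_odd.mpr ho), if_neg (Nat.not_even_iff_odd.mpr ho),
        ho.neg_one_pow]; ring
  rw [Finset.sum_congr rfl hsimp, hNdef, pair_sum]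
  have hn0 : (n:ℝ) ≠ 0 := ne_of_gt hnR
  push_cast
  field_simp
  ring
end
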